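/- Let α > 1/2 and let H_α be the Struve function. Then H_α(x) ≍ min{x^{α+1}, x^{α-1}} for all x > 0, i.e., there exist constants c, C > 0 such that c min{x^{α+1}, x^{α-1}} ≤ H_α(x) ≤ C min{x^{α+1}, x^{α-1}} for every x > 0. -/

import Mathlib

open Set
open scoped ENNReal

/-- The series appearing in the definition of the Struve function `H_α`. -/
noncomputable def struveSeries (α x : ℝ) : ℝ :=
  ∑' k : ℕ, (-1 : ℝ) ^ k * (x / 2) ^ (2 * k) /
    (Real.Gamma ((k : ℝ) + 3 / 2) * Real.Gamma ((k : ℝ) + α + 3 / 2))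

/-- The Struve function of order `α`. -/
noncomputable def struveH (α x : ℝ) : ℝ := (x / 2) ^ (α + 1) * struveSeries α x

open MeasureTheory intervalIntegral Nat
open scoped Real



lemma complexify_beta_integrand {a b : ℝ} (t : ℝ) (ht0 : 0 ≤ t) (ht1 : t ≤ 1) :
    ((t ^ (a-1) * (1-t) ^ (b-1) : ℝ) : ℂ)
      = (t : ℂ) ^ ((a:ℂ)-1) * (1 - (t:ℂ)) ^ ((b:ℂ)-1) := by
  rw [Complex.ofReal_mul, Complex.ofReal_cpow ht0, Complex.ofReal_cpow (by linarith)]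
  push_cast
  ring_nf

lemma real_beta_integrable {a b : ℝ} (ha : 0 < a) (hb : 0 < b) :
    IntervalIntegrable (fun t : ℝ => t ^ (a-1) * (1-t) ^ (b-1)) volume 0 1 := by
  have hC := Complex.betaIntegral_convergent (u := a) (v := b) (by simpa) (by simpa)
  have hre : IntervalIntegrable
      (fun t : ℝ => ((t:ℂ) ^ ((a:ℂ)-1) * (1 - (t:ℂ)) ^ ((b:ℂ)-1)).re) volume 0 1 :=
    ⟨hC.1.re, hC.2.re⟩
  refine hre.congr ?_
  intro t ht
  beta_reduce
  rw [uIoc_of_le (zero_le_one (α := ℝ))] at ht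
  rw [← complexify_beta_integrand t ht.1.le ht.2, Complex.ofReal_re]

lemma real_beta_value {a b : ℝ} (ha : 0 < a) (hb : 0 < b) :
    ∫ t in (0:ℝ)..1, t ^ (a-1) * (1-t) ^ (b-1)
      = Real.Gamma a * Real.Gamma b / Real.Gamma (a+b) := by
  have h1 : Complex.Gamma a * Complex.Gamma b
      = Complex.Gamma (a+b) * Complex.betaIntegral a b := by
    exact Complex.Gamma_mul_Gamma_eq_betaIntegral (by simpa) (by simpa)
  have h2 : Complex.betaIntegral a b = ((∫ t in (0:ℝ)..1, t ^ (a-1) * (1-t) ^ (b-1) : ℝ) : ℂ) := by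
    rw [Complex.betaIntegral, ← intervalIntegral.integral_ofReal]
    refine intervalIntegral.integral_congr_ae ?_
    filter_upwards with t ht
    rw [uIoc_of_le (zero_le_one (α := ℝ))] at ht
    exact (complexify_beta_integrand t ht.1.le ht.2).symm
  rw [h2] at h1
  have h3 : Real.Gamma a * Real.Gamma b
      = Real.Gamma (a+b) * ∫ t in (0:ℝ)..1, t ^ (a-1) * (1-t) ^ (b-1) := by
    rw [← Complex.ofReal_inj]
    push_cast [← Complex.Gamma_ofReal]
    exact h1
  have hΓab : Real.Gamma (a+b) ≠ 0 := (Real.Gamma_pos_of_pos (by linarith)).ne'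
  rw [eq_div_iff hΓab, mul_comm _ (Real.Gamma (a+b)), ← h3]

open Set MeasureTheory intervalIntegral

/-- the weight function `-f'` where `f t = (1-t^2)^β` -/
noncomputable def hfun (β t : ℝ) : ℝ := 2*β*t*(1-t^2) ^ (β-1)

lemma sq_image_Ioo : (fun t : ℝ => t^2) '' Ioo 0 1 = Ioo 0 1 := by
  ext u
  constructor
  · rintro ⟨t, ⟨ht0, ht1⟩, rfl⟩
    refine ⟨by positivity, ?_⟩
    show t^2 < 1
    nlinarith
  · rintro ⟨hu0, hu1⟩
    refine ⟨Real.sqrt u, ⟨Real.sqrt_pos.mpr hu0, ?_⟩, Real.sq_sqrt hu0.le⟩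
    rw [show (1:ℝ) = Real.sqrt 1 by simp]
    exact Real.sqrt_lt_sqrt hu0.le hu1

lemma sq_injOn : InjOn (fun t : ℝ => t^2) (Ioo 0 1) := fun a ha b hb h => by
  have h2 : (a-b)*(a+b) = 0 := by
    have : a^2 = b^2 := h
    ring_nf
    nlinarith [this]
  rcases mul_eq_zero.mp h2 with h3 | h3
  · linarith
  · nlinarith [ha.1, hb.1]

lemma sq_hasDeriv : ∀ t ∈ Ioo (0:ℝ) 1,
    HasDerivWithinAt (fun t : ℝ => t^2) (2*t) (Ioo 0 1) t := by
  intro t _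
  simpa using (hasDerivAt_pow 2 t).hasDerivWithinAt

lemma moment_integrand_eq {β : ℝ} (m : ℕ) {t : ℝ} (ht : t ∈ Ioo (0:ℝ) 1) :
    |2*t| • (β * (t^2) ^ ((m:ℝ)) * (1-t^2) ^ (β-1)) = hfun β t * t^(2*m) := by
  have ht0 := ht.1
  rw [abs_of_pos (by linarith), smul_eq_mul, Real.rpow_natCast, ← pow_mul, hfun]
  ring

lemma moment_value {β : ℝ} (hβ : 0 < β) (m : ℕ) :
    ∫ t in Ioo (0:ℝ) 1, hfun β t * t^(2*m)
      = Real.Gamma (m+1) * Real.Gamma (β+1) / Real.Gamma (m+1+β) := by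
  have key := integral_image_eq_integral_abs_deriv_smul measurableSet_Ioo sq_hasDeriv sq_injOn
      (fun u => β * u ^ ((m:ℝ)) * (1-u) ^ (β-1))
  rw [sq_image_Ioo] at key
  have hR : ∫ t in Ioo (0:ℝ) 1, hfun β t * t^(2*m)
      = ∫ u in Ioo (0:ℝ) 1, β * u ^ ((m:ℝ)) * (1-u) ^ (β-1) := by
    rw [key]
    exact setIntegral_congr_fun measurableSet_Ioo fun t ht => (moment_integrand_eq m ht).symm
  rw [hR]
  have hI : ∫ u in Ioo (0:ℝ) 1, β * u ^ ((m:ℝ)) * (1-u) ^ (β-1)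
      = β * ∫ u in (0:ℝ)..1, u ^ (((m:ℝ)+1)-1) * (1-u) ^ (β-1) := by
    rw [integral_of_le zero_le_one, integral_Ioc_eq_integral_Ioo, ← MeasureTheory.integral_const_mul]
    refine setIntegral_congr_fun measurableSet_Ioo fun u _ => ?_
    norm_num
    ring
  rw [hI, real_beta_value (by positivity) hβ]
  rw [Real.Gamma_add_one hβ.ne']
  have : (m:ℝ) + 1 + β = (m:ℝ)+1+β := rfl
  field_simp
lemma moment_integrable {β : ℝ} (hβ : 0 < β) (m : ℕ) :
    IntegrableOn (fun t => hfun β t * t^(2*m)) (Ioo (0:ℝ) 1) := by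
  have hg : IntegrableOn (fun u => β * u ^ ((m:ℝ)) * (1-u) ^ (β-1)) (Ioo (0:ℝ) 1) := by
    have h1 := (real_beta_integrable (a := (m:ℝ)+1) (b := β) (by positivity) hβ).1
    simp only [add_sub_cancel_right] at h1
    have h2 := (h1.mono_set Ioo_subset_Ioc_self).const_mul β
    exact IntegrableOn.congr_fun h2 (fun u _ => by ring) measurableSet_Ioo
  have := (integrableOn_image_iff_integrableOn_abs_deriv_smul measurableSet_Ioo sq_hasDeriv
    sq_injOn (fun u => β * u ^ ((m:ℝ)) * (1-u) ^ (β-1))).mp (by rwa [sq_image_Ioo])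
  exact IntegrableOn.congr_fun this (fun t ht => moment_integrand_eq m ht) measurableSet_Ioo

lemma hfun_nonneg {β : ℝ} (hβ : 0 < β) {t : ℝ} (ht : t ∈ Ioo (0:ℝ) 1) : 0 ≤ hfun β t := by
  have h1 : (0:ℝ) < 1 - t^2 := by nlinarith [ht.1, ht.2]
  have := Real.rpow_pos_of_pos h1 (β-1)
  have := ht.1
  unfold hfun; positivity

lemma hfun_pos {β : ℝ} (hβ : 0 < β) {t : ℝ} (ht : t ∈ Ioo (0:ℝ) 1) : 0 < hfun β t := by
  have h1 : (0:ℝ) < 1 - t^2 := by nlinarith [ht.1, ht.2]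
  have := Real.rpow_pos_of_pos h1 (β-1)
  have := ht.1
  unfold hfun; positivity

lemma hfun_integrable {β : ℝ} (hβ : 0 < β) : IntegrableOn (hfun β) (Ioo (0:ℝ) 1) := by
  simpa using moment_integrable hβ 0

lemma hfun_integral {β : ℝ} (hβ : 0 < β) : ∫ t in Ioo (0:ℝ) 1, hfun β t = 1 := by
  have h0 := moment_value hβ 0
  simp only [mul_zero, pow_zero, mul_one, Nat.cast_zero, zero_add, Real.Gamma_one, one_mul] at h0
  rw [h0, add_comm (1:ℝ) β]
  have h := (Real.Gamma_pos_of_pos (by linarith : (0:ℝ) < β + 1)).ne'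
  field_simp

lemma hfun_measurable (β : ℝ) : Measurable (hfun β) := by
  unfold hfun
  fun_prop
noncomputable def Gfun (β x : ℝ) : ℝ := ∫ t in Ioo (0:ℝ) 1, hfun β t * (1 - Real.cos (x*t))

lemma gamma_dup (k : ℕ) :
    Real.Gamma ((k:ℝ)+3/2) * Real.Gamma ((k:ℝ)+2) * 2^(2*k+2)
      = ((2*k+2)! : ℝ) * Real.sqrt π := by
  have hd := Real.Gamma_mul_Gamma_add_half ((k:ℝ)+3/2)
  rw [show (k:ℝ)+3/2+1/2 = (k:ℝ)+2 by ring, show 2*((k:ℝ)+3/2) = ((2*k+2 : ℕ):ℝ)+1 by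
    push_cast; ring, Real.Gamma_nat_eq_factorial] at hd
  have hexp : (2:ℝ) ^ (1-(((2*k+2 : ℕ):ℝ)+1)) = ((2:ℝ)^(2*k+2))⁻¹ := by
    rw [show 1-(((2*k+2 : ℕ):ℝ)+1) = -((2*k+2 : ℕ):ℝ) by ring,
      Real.rpow_neg (by norm_num), Real.rpow_natCast]
  rw [hd, hexp]
  field_simp

/-- the summand in the struve series written with `β` -/
noncomputable def sterm (β x : ℝ) (k : ℕ) : ℝ :=
  (-1:ℝ)^k * (x/2)^(2*k) / (Real.Gamma ((k:ℝ)+3/2) * Real.Gamma ((k:ℝ)+β+2))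

/-- the summand appearing after expanding `1 - cos` -/
noncomputable def cterm (x : ℝ) (k : ℕ) : ℝ := (-1:ℝ)^k * x^(2*k+2) / ((2*k+2)! : ℝ)

lemma cterm_moment_eq {β x : ℝ} (hβ : 0 < β) (k : ℕ) :
    cterm x k * (Real.Gamma ((k:ℝ)+1+1) * Real.Gamma (β+1) / Real.Gamma ((k:ℝ)+1+1+β))
      = (Real.sqrt π * Real.Gamma (β+1) / 4) * x^2 * sterm β x k := by
  have hdup := gamma_dup k
  have h32 : (0:ℝ) < Real.Gamma ((k:ℝ)+3/2) := Real.Gamma_pos_of_pos (by positivity)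
  have hkb : (0:ℝ) < Real.Gamma ((k:ℝ)+β+2) := Real.Gamma_pos_of_pos (by positivity)
  have hfac : (0:ℝ) < ((2*k+2)! : ℝ) := by positivity
  rw [show (k:ℝ)+1+1 = (k:ℝ)+2 by ring, show (k:ℝ)+2+β = (k:ℝ)+β+2 by ring]
  have hΓ2 : Real.Gamma ((k:ℝ)+2) = ((2*k+2)! : ℝ) * Real.sqrt π
      / (Real.Gamma ((k:ℝ)+3/2) * 2^(2*k+2)) := by
    field_simp at hdup ⊢
    linarith [hdup]
  rw [hΓ2, cterm, sterm]
  have hx2 : x^(2*k+2) = x^2 * x^(2*k) := by ring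
  have h22 : (2:ℝ)^(2*k+2) = 4 * 2^(2*k) := by ring
  rw [div_pow, hx2, h22]
  field_simp
lemma hasSum_integrand {β : ℝ} (x t : ℝ) :
    HasSum (fun k => cterm x k * (hfun β t * t^(2*(k+1))))
      (hfun β t * (1 - Real.cos (x*t))) := by
  have hc := Real.hasSum_cos (x*t)
  have h1 := (hasSum_nat_add_iff' (f := fun n : ℕ => (-1:ℝ)^n * (x*t)^(2*n) / ((2*n)! : ℝ)) 1).mpr hc
  simp only [Finset.range_one, Finset.sum_singleton, pow_zero, mul_zero, mul_one,
    Nat.factorial_zero, Nat.cast_one, div_one] at h1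
  have h2 := (h1.neg.mul_left (hfun β t))
  rw [neg_sub] at h2
  convert h2 using 2 with k
  · rfl
  rw [cterm]
  have hfa : ((2*(k+1))! : ℝ) = ((2*k+2)! : ℝ) := by norm_num [show 2*(k+1) = 2*k+2 from by ring]
  rw [show 2*(k+1) = 2*k+2 from by ring] at hfa ⊢
  rw [mul_pow, pow_succ]
  field_simp
  ring

lemma integral_F {β : ℝ} (hβ : 0 < β) (x : ℝ) (k : ℕ) :
    ∫ t in Ioo (0:ℝ) 1, cterm x k * (hfun β t * t^(2*(k+1)))
      = (Real.sqrt π * Real.Gamma (β+1) / 4) * x^2 * sterm β x k := by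
  rw [MeasureTheory.integral_const_mul, moment_value hβ (k+1)]
  push_cast
  exact cterm_moment_eq hβ k

lemma Gfun_eq {β : ℝ} (hβ : 0 < β) (x : ℝ) :
    Gfun β x = (Real.sqrt π * Real.Gamma (β+1) / 4) * x^2 * ∑' k, sterm β x k := by
  set F : ℕ → ℝ → ℝ := fun k t => cterm x k * (hfun β t * t^(2*(k+1))) with hF
  have hFint : ∀ k, Integrable (F k) (volume.restrict (Ioo (0:ℝ) 1)) :=
    fun k => (moment_integrable hβ (k+1)).const_mul _
  have habs : ∀ k, ∫ t in Ioo (0:ℝ) 1, ‖F k t‖ ≤ |x|^(2*k+2) / ((2*k+2)! : ℝ) := by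
    intro k
    have hctm : |cterm x k| = |x|^(2*k+2) / ((2*k+2)! : ℝ) := by
      rw [cterm, abs_div, abs_mul, abs_pow, abs_pow, abs_neg, abs_one, one_pow, one_mul,
        Nat.abs_cast]
    have h1 : ∫ t in Ioo (0:ℝ) 1, ‖F k t‖
        = |cterm x k| * ∫ t in Ioo (0:ℝ) 1, hfun β t * t^(2*(k+1)) := by
      rw [← MeasureTheory.integral_const_mul]
      refine setIntegral_congr_fun measurableSet_Ioo (fun t ht => ?_)
      rw [hF]
      simp only [Real.norm_eq_abs, abs_mul]
      rw [abs_of_nonneg (hfun_nonneg hβ ht), abs_of_nonneg (pow_nonneg ht.1.le _)]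
    rw [h1, hctm]
    have h2 : ∫ t in Ioo (0:ℝ) 1, hfun β t * t^(2*(k+1)) ≤ 1 := by
      have hmono : ∫ t in Ioo (0:ℝ) 1, hfun β t * t^(2*(k+1)) ≤ ∫ t in Ioo (0:ℝ) 1, hfun β t := by
        refine setIntegral_mono_on (moment_integrable hβ (k+1)) (hfun_integrable hβ)
          measurableSet_Ioo (fun t ht => ?_)
        have ht2 : t^(2*(k+1)) ≤ 1 := pow_le_one₀ ht.1.le ht.2.le
        nlinarith [hfun_nonneg hβ ht]
      rw [hfun_integral hβ] at hmono
      exact hmono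
    have h3 : (0:ℝ) ≤ |x|^(2*k+2) / ((2*k+2)! : ℝ) := by positivity
    calc |x|^(2*k+2) / ((2*k+2)! : ℝ) * ∫ t in Ioo (0:ℝ) 1, hfun β t * t^(2*(k+1))
        ≤ |x|^(2*k+2) / ((2*k+2)! : ℝ) * 1 := by
          apply mul_le_mul_of_nonneg_left h2 h3
      _ = _ := mul_one _
  have hsumb : Summable (fun k : ℕ => |x|^(2*k+2) / ((2*k+2)! : ℝ)) := by
    have hi : Function.Injective (fun k : ℕ => 2*k+2) := fun a b hab => by dsimp at hab; omega
    simpa [Function.comp_def] using (Real.summable_pow_div_factorial |x|).comp_injective hi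
  have hsum : Summable (fun k => ∫ t in Ioo (0:ℝ) 1, ‖F k t‖) :=
    Summable.of_nonneg_of_le (fun k => integral_nonneg (fun t => norm_nonneg _)) habs hsumb
  have hkey := integral_tsum_of_summable_integral_norm hFint hsum
  have hptw : ∫ t in Ioo (0:ℝ) 1, ∑' k, F k t = Gfun β x := by
    refine setIntegral_congr_fun measurableSet_Ioo (fun t _ => ?_)
    exact (hasSum_integrand x t).tsum_eq
  rw [hptw] at hkey
  rw [← hkey]
  have : ∀ k, ∫ t in Ioo (0:ℝ) 1, F k t
      = (Real.sqrt π * Real.Gamma (β+1) / 4 * x^2) * sterm β x k := by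
    intro k
    rw [hF]
    simpa using integral_F hβ x k
  rw [tsum_congr this, tsum_mul_left]
lemma integrable_hfun_mul {β : ℝ} (hβ : 0 < β) {g : ℝ → ℝ} (hg : Measurable g)
    (hbd : ∀ t, |g t| ≤ 2) :
    IntegrableOn (fun t => hfun β t * g t) (Ioo (0:ℝ) 1) := by
  apply Integrable.mono' ((hfun_integrable hβ).const_mul 2)
  · exact ((hfun_measurable β).mul hg).aestronglyMeasurable
  · filter_upwards [ae_restrict_mem measurableSet_Ioo] with t ht
    rw [Real.norm_eq_abs, abs_mul, abs_of_nonneg (hfun_nonneg hβ ht)]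
    nlinarith [hfun_nonneg hβ ht, abs_nonneg (g t), hbd t]

lemma integrable_G_integrand {β : ℝ} (hβ : 0 < β) (x : ℝ) :
    IntegrableOn (fun t => hfun β t * (1 - Real.cos (x*t))) (Ioo (0:ℝ) 1) := by
  refine integrable_hfun_mul hβ (by fun_prop) (fun t => ?_)
  rw [abs_le]
  constructor <;> nlinarith [Real.neg_one_le_cos (x*t), Real.cos_le_one (x*t)]

lemma integrable_K_integrand {β : ℝ} (hβ : 0 < β) (x : ℝ) :
    IntegrableOn (fun t => hfun β t * Real.cos (x*t)) (Ioo (0:ℝ) 1) := by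
  refine integrable_hfun_mul hβ (by fun_prop) (fun t => ?_)
  rw [abs_le]
  constructor <;> nlinarith [Real.neg_one_le_cos (x*t), Real.cos_le_one (x*t)]

lemma Gfun_le {β : ℝ} (hβ : 0 < β) (x : ℝ) : Gfun β x ≤ 2 * min 1 (x^2) := by
  have hA : Gfun β x ≤ 2 := by
    have : Gfun β x ≤ ∫ t in Ioo (0:ℝ) 1, 2 * hfun β t := by
      refine setIntegral_mono_on (integrable_G_integrand hβ x)
        ((hfun_integrable hβ).const_mul 2) measurableSet_Ioo (fun t ht => ?_)
      nlinarith [hfun_nonneg hβ ht, Real.neg_one_le_cos (x*t)]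
    rwa [MeasureTheory.integral_const_mul, hfun_integral hβ, mul_one] at this
  have hB : Gfun β x ≤ x^2 := by
    have h1 : Gfun β x ≤ ∫ t in Ioo (0:ℝ) 1, (x^2/2) * hfun β t := by
      refine setIntegral_mono_on (integrable_G_integrand hβ x)
        ((hfun_integrable hβ).const_mul _) measurableSet_Ioo (fun t ht => ?_)
      have hc : 1 - Real.cos (x*t) ≤ (x*t)^2/2 := by
        nlinarith [Real.one_sub_sq_div_two_le_cos (x := x*t)]
      have ht2 : (x*t)^2 ≤ x^2 := by nlinarith [mul_nonneg (sq_nonneg x) (by nlinarith [ht.1, ht.2] : (0:ℝ) ≤ 1 - t^2)]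
      nlinarith [hfun_nonneg hβ ht]
    rw [MeasureTheory.integral_const_mul, hfun_integral hβ, mul_one] at h1
    nlinarith [sq_nonneg x]
  rcases le_total (x^2) 1 with h | h
  · rw [min_eq_right h]; nlinarith
  · rw [min_eq_left h]; nlinarith

lemma Gfun_lower_small {β : ℝ} (hβ : 0 < β) {x : ℝ} (hx0 : 0 < x) (hx1 : x ≤ 1) :
    (Real.Gamma (β+1) / Real.Gamma (β+2)) / 4 * x^2 ≤ Gfun β x := by
  have hm : ∫ t in Ioo (0:ℝ) 1, hfun β t * t^(2*1)
      = Real.Gamma (β+1) / Real.Gamma (β+2) := by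
    rw [moment_value hβ 1]
    norm_num [Real.Gamma_two]
    rw [add_comm (2:ℝ) β]
  have h1 : ∫ t in Ioo (0:ℝ) 1, (x^2/4) * (hfun β t * t^(2*1)) ≤ Gfun β x := by
    refine setIntegral_mono_on ((moment_integrable hβ 1).const_mul _)
      (integrable_G_integrand hβ x) measurableSet_Ioo (fun t ht => ?_)
    set y := x*t with hy
    have hyabs : |y| ≤ 1 := by
      rw [abs_of_nonneg (by nlinarith [ht.1] : (0:ℝ) ≤ y)]
      nlinarith [ht.1, ht.2]
    have hcb := Real.cos_bound hyabs
    rw [abs_le] at hcb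
    have hy2 : y^2 ≤ 1 := by nlinarith [abs_nonneg y, sq_abs y]
    have hy4 : |y|^4 ≤ y^2 := by
      have h44 : |y|^4 = (y^2)^2 := by
        rw [show (4:ℕ) = 2*2 from rfl, pow_mul, sq_abs]
      nlinarith [sq_nonneg y]
    have hlow : y^2/4 ≤ 1 - Real.cos y := by nlinarith
    have : (x^2/4) * t^(2*1) = y^2/4 := by rw [hy]; ring
    have hnn := hfun_nonneg hβ ht
    nlinarith
  rw [MeasureTheory.integral_const_mul, hm] at h1
  nlinarith
lemma Gfun_pos {β : ℝ} (hβ : 0 < β) {x : ℝ} (hx : 0 < x) : 0 < Gfun β x := by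
  rw [Gfun, setIntegral_pos_iff_support_of_nonneg_ae]
  · set Z : Set ℝ := {t : ℝ | Real.cos (x*t) = 1} with hZ
    have hZc : Z.Countable := by
      have hsub : Z ⊆ Set.range (fun n : ℤ => ((n : ℝ) * (2*π)) / x) := by
        intro t ht
        obtain ⟨n, hn⟩ := (Real.cos_eq_one_iff (x*t)).mp ht
        exact ⟨n, by field_simp [hn]; linarith [hn]⟩
      exact (Set.countable_range _).mono hsub
    have hsub2 : Ioo (0:ℝ) 1 \ Z ⊆
        (Function.support fun t => hfun β t * (1 - Real.cos (x*t))) ∩ Ioo 0 1 := by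
      rintro t ⟨ht, htZ⟩
      refine ⟨?_, ht⟩
      have h1 : 0 < hfun β t := hfun_pos hβ ht
      have h2 : Real.cos (x*t) < 1 := lt_of_le_of_ne (Real.cos_le_one _) htZ
      have : (0:ℝ) < hfun β t * (1 - Real.cos (x*t)) := by nlinarith
      exact ne_of_gt this
    have hmeas : volume (Ioo (0:ℝ) 1 \ Z) = 1 := by
      rw [measure_diff_null (hZc.measure_zero _)]
      simp
    calc (0:ENNReal) < 1 := by norm_num
      _ = volume (Ioo (0:ℝ) 1 \ Z) := hmeas.symm
      _ ≤ _ := measure_mono hsub2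
  · filter_upwards [ae_restrict_mem measurableSet_Ioo] with t ht
    simp only [Pi.zero_apply]
    nlinarith [hfun_nonneg hβ ht, Real.cos_le_one (x*t)]
  · exact integrable_G_integrand hβ x

lemma Gfun_continuous {β : ℝ} (hβ : 0 < β) : Continuous (Gfun β) := by
  refine MeasureTheory.continuous_of_dominated (bound := fun t => 2 * hfun β t)
    (fun x => ((hfun_measurable β).mul (by fun_prop)).aestronglyMeasurable) ?_
    ((hfun_integrable hβ).const_mul 2) ?_
  · intro x
    filter_upwards [ae_restrict_mem measurableSet_Ioo] with t ht
    rw [Real.norm_eq_abs, abs_mul, abs_of_nonneg (hfun_nonneg hβ ht)]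
    have h1 : |1 - Real.cos (x*t)| ≤ 2 := by
      rw [abs_le]
      constructor <;> nlinarith [Real.neg_one_le_cos (x*t), Real.cos_le_one (x*t)]
    nlinarith [hfun_nonneg hβ ht, abs_nonneg (1 - Real.cos (x*t))]
  · filter_upwards with t
    fun_prop

lemma K_tendsto {β : ℝ} (hβ : 0 < β) :
    Filter.Tendsto (fun x => ∫ t in Ioo (0:ℝ) 1, hfun β t * Real.cos (x*t))
      Filter.atTop (nhds 0) := by
  set phi : ℝ → ℝ := (Ioo (0:ℝ) 1).indicator (hfun β) with hphi
  have hphiint : Integrable phi := by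
    rw [hphi, integrable_indicator_iff measurableSet_Ioo]
    exact hfun_integrable hβ
  set Phi : ℝ → ℂ := fun t => (phi t : ℂ) with hPhi
  have hPhiint : Integrable Phi := hphiint.ofReal
  have hRL := Real.tendsto_integral_exp_smul_cocompact Phi
  have hmap : Filter.Tendsto (fun x : ℝ => x / (2*π)) Filter.atTop (Filter.cocompact ℝ) := by
    have h1 : Filter.Tendsto (fun x : ℝ => x / (2*π)) Filter.atTop Filter.atTop :=
      Filter.tendsto_id.atTop_div_const (by positivity)
    refine h1.mono_right ?_
    rw [cocompact_eq_atBot_atTop]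
    exact le_sup_right
  have htend := hRL.comp hmap
  have heq : (fun x => ∫ t in Ioo (0:ℝ) 1, hfun β t * Real.cos (x*t))
      = (fun z : ℂ => z.re) ∘ ((fun w : ℝ => ∫ v : ℝ, Real.fourierChar (-(v * w)) • Phi v) ∘
          (fun x : ℝ => x / (2*π))) := by
    funext x
    have hint2 : Integrable (fun v : ℝ => Real.fourierChar (-(v * (x/(2*π)))) • Phi v) := by
      have := (Real.fourierIntegral_convergent_iff (μ := volume) (f := Phi) (x/(2*π))).2 hPhiint
      simpa [mul_comm] using this
    have hre := integral_re (μ := volume) hint2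
    simp only [Function.comp_apply, RCLike.re_to_complex] at hre ⊢
    rw [← hre]
    rw [← MeasureTheory.integral_indicator measurableSet_Ioo]
    congr 1
    funext v
    rw [Circle.smul_def, Real.fourierChar_apply]
    rw [show Phi v = ((phi v : ℝ) : ℂ) from rfl, smul_eq_mul]
    rw [Complex.mul_re, Complex.exp_ofReal_mul_I_re, Complex.exp_ofReal_mul_I_im]
    simp only [Complex.ofReal_re, Complex.ofReal_im, mul_zero, sub_zero]
    rw [show 2 * π * -(v * (x/(2*π))) = -(x*v) by field_simp, Real.cos_neg]
    by_cases hv : v ∈ Ioo (0:ℝ) 1 <;>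
      simp [hphi, Set.indicator_apply, hv, mul_comm]
  rw [heq]
  have hretend : Filter.Tendsto (fun z : ℂ => z.re) (nhds 0) (nhds 0) := by
    simpa using (Complex.continuous_re.tendsto 0)
  exact hretend.comp htend

lemma Gfun_decomp {β : ℝ} (hβ : 0 < β) (x : ℝ) :
    Gfun β x = 1 - ∫ t in Ioo (0:ℝ) 1, hfun β t * Real.cos (x*t) := by
  have h := MeasureTheory.integral_sub (hfun_integrable hβ) (integrable_K_integrand hβ x)
  have h2 : Gfun β x = ∫ t in Ioo (0:ℝ) 1,
      (hfun β t - hfun β t * Real.cos (x*t)) := by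
    refine setIntegral_congr_fun measurableSet_Ioo (fun t _ => ?_)
    ring
  rw [h2]
  have h' : ∫ t in Ioo (0:ℝ) 1, (hfun β t - hfun β t * Real.cos (x*t))
      = (∫ t in Ioo (0:ℝ) 1, hfun β t) - ∫ t in Ioo (0:ℝ) 1, hfun β t * Real.cos (x*t) := h
  rw [h', hfun_integral hβ]

/-- For `α > 1/2`, `H_α(x) ≍ min{x^{α+1}, x^{α-1}}` for all `x > 0`. -/
theorem struve_two_sided_estimate (α : ℝ) (hα : 1 / 2 < α) :
    ∃ c C : ℝ, 0 < c ∧ 0 < C ∧ ∀ x ∈ Ioi (0 : ℝ),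
      c * min (x ^ (α + 1)) (x ^ (α - 1)) ≤ struveH α x ∧
        struveH α x ≤ C * min (x ^ (α + 1)) (x ^ (α - 1)) := by
  set β := α - 1/2 with hβdef
  have hβ : 0 < β := by rw [hβdef]; linarith
  have hser : ∀ x : ℝ, struveSeries α x = ∑' k, sterm β x k := by
    intro x
    unfold struveSeries sterm
    refine tsum_congr (fun k => ?_)
    rw [show (k:ℝ) + α + 3/2 = (k:ℝ) + β + 2 by rw [hβdef]; ring]
  set C₀ := Real.sqrt π * Real.Gamma (β+1) / 4 with hC₀
  have hΓβ1 : 0 < Real.Gamma (β+1) := Real.Gamma_pos_of_pos (by linarith)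
  have hsπ : 0 < Real.sqrt π := Real.sqrt_pos.mpr Real.pi_pos
  have hC₀pos : 0 < C₀ := by rw [hC₀]; positivity
  have hK := K_tendsto hβ
  have hev : ∀ᶠ x in Filter.atTop,
      |∫ t in Ioo (0:ℝ) 1, hfun β t * Real.cos (x*t)| < 1/2 := by
    have := (Metric.tendsto_nhds.mp hK) (1/2) (by norm_num)
    simpa [Real.dist_eq] using this
  obtain ⟨X₀, hX₀⟩ := Filter.eventually_atTop.mp hev
  set X₁ := max X₀ 1 with hX₁
  obtain ⟨x₀, hx₀S, hmin⟩ := isCompact_Icc.exists_isMinOn (s := Icc (1:ℝ) X₁)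
    ⟨1, le_refl 1, le_max_right _ _⟩ (Gfun_continuous hβ).continuousOn
  have hm : 0 < Gfun β x₀ := Gfun_pos hβ (lt_of_lt_of_le one_pos hx₀S.1)
  set m2 := (Real.Gamma (β+1) / Real.Gamma (β+2)) / 4 with hm2
  have hΓβ2 : 0 < Real.Gamma (β+2) := Real.Gamma_pos_of_pos (by linarith)
  have hm2pos : 0 < m2 := by rw [hm2]; positivity
  set c' := min (min m2 (Gfun β x₀)) (1/2) with hc'
  have hc'pos : 0 < c' := lt_min (lt_min hm2pos hm) (by norm_num)
  have hlow : ∀ x : ℝ, 0 < x → c' * min 1 (x^2) ≤ Gfun β x := by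
    intro x hx
    rcases le_total x 1 with h1 | h1
    · have hls := Gfun_lower_small hβ hx h1
      have hmin1 : min 1 (x^2) = x^2 := min_eq_right (by nlinarith)
      rw [hmin1]
      have hcm : c' ≤ m2 := le_trans (min_le_left _ _) (min_le_left _ _)
      rw [hm2] at hcm
      nlinarith [sq_nonneg x]
    · have hmin1 : min 1 (x^2) = 1 := min_eq_left (by nlinarith)
      rw [hmin1, mul_one]
      rcases le_total x X₁ with h2 | h2
      · have hGx : Gfun β x₀ ≤ Gfun β x := hmin ⟨h1, h2⟩
        exact le_trans (le_trans (min_le_left _ _) (min_le_right _ _)) hGx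
      · have hxX₀ : X₀ ≤ x := le_trans (le_max_left _ _) h2
        have hKx := hX₀ x hxX₀
        have hdecomp := Gfun_decomp hβ x
        have hG2 : 1/2 ≤ Gfun β x := by
          rw [hdecomp]
          rcases abs_lt.mp hKx with ⟨hl, hr⟩
          linarith
        exact le_trans (min_le_right _ _) hG2
  have hGeq : ∀ x : ℝ, Gfun β x = C₀ * x^2 * struveSeries α x := fun x => by
    rw [hser x]; exact Gfun_eq hβ x
  set D := (2:ℝ) ^ (α+1) * C₀ with hD
  have h2pow : (0:ℝ) < (2:ℝ) ^ (α+1) := Real.rpow_pos_of_pos two_pos _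
  have hDpos : 0 < D := by rw [hD]; positivity
  have hxpow : ∀ x : ℝ, 0 < x → x ^ (α+1) = x ^ (α-1) * x^2 := by
    intro x hx
    have h1 : x ^ (α+1) = x ^ (α-1) * x ^ (2:ℝ) := by
      rw [← Real.rpow_add hx]; ring_nf
    rw [h1, show (2:ℝ) = ((2:ℕ):ℝ) by norm_num, Real.rpow_natCast]
  have hstruve : ∀ x : ℝ, 0 < x → struveH α x = x ^ (α-1) * Gfun β x / D := by
    intro x hx
    have hx2 : (x:ℝ)^2 ≠ 0 := by positivity
    have h1 : struveSeries α x = Gfun β x / (C₀ * x^2) := by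
      rw [hGeq x]; field_simp
    rw [struveH, h1, Real.div_rpow hx.le (by norm_num), hxpow x hx, hD]
    field_simp
  have hminid : ∀ x : ℝ, 0 < x →
      min (x ^ (α+1)) (x ^ (α-1)) = x ^ (α-1) * min (x^2) 1 := by
    intro x hx
    have := mul_min_of_nonneg (x^2) 1 (le_of_lt (Real.rpow_pos_of_pos hx (α-1)))
    rw [mul_one, ← hxpow x hx] at this
    exact this.symm
  refine ⟨c' / D, 2 / D, by positivity, by positivity, fun x hx => ?_⟩
  have hx0 : 0 < x := hx
  have hxa1 : (0:ℝ) ≤ x ^ (α-1) := (Real.rpow_pos_of_pos hx0 _).le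
  constructor
  · have key : c' * (x ^ (α-1) * min (x^2) 1) ≤ x ^ (α-1) * Gfun β x := by
      calc c' * (x ^ (α-1) * min (x^2) 1) = x ^ (α-1) * (c' * min 1 (x^2)) := by
            rw [min_comm]; ring
        _ ≤ x ^ (α-1) * Gfun β x := mul_le_mul_of_nonneg_left (hlow x hx0) hxa1
    rw [hstruve x hx0, hminid x hx0, div_mul_eq_mul_div]
    gcongr
  · have key : x ^ (α-1) * Gfun β x ≤ 2 * (x ^ (α-1) * min (x^2) 1) := by
      calc x ^ (α-1) * Gfun β x ≤ x ^ (α-1) * (2 * min 1 (x^2)) :=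
            mul_le_mul_of_nonneg_left (Gfun_le hβ x) hxa1
        _ = 2 * (x ^ (α-1) * min (x^2) 1) := by rw [min_comm]; ring
    rw [hstruve x hx0, hminid x hx0, div_mul_eq_mul_div]
    gcongr
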